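/- arXiv:1910.00195 — 2 statements merged into one kernel-verified Lean document; each statement's English description precedes it below -/
import Mathlib

section
/- Let n, m be positive integers, let λ_1, …, λ_n : ℝ^m → ℝ be differentiable, and let L(θ̄, θ̂) = L* + (1/2) Σ_{j=1}^n θ_j² λ_j(θ̂) be the valley loss. Let μ be a probability measure on ℝ^n with ∫ θ_j² dμ(θ̄) = c_j < ∞ for each j. Then for every i = 1, …, n and every θ̂ ∈ ℝ^m, the expected alignment of ∇̂λ_i with the degenerate-space gradient satisfies ∫ ⟨∇̂λ_i(θ̂), ∇̂L(θ̄, θ̂)⟩ dμ(θ̄) = (1/2) Σ_{j=1}^n c_j ⟨∇̂λ_i(θ̂), ∇̂λ_j(θ̂)⟩. -/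
open MeasureTheory

lemma valley_gradient (m : ℕ) (n : ℕ) (lam : Fin n → EuclideanSpace ℝ (Fin m) → ℝ)
    (hlam : ∀ j, Differentiable ℝ (lam j)) (Lstar : ℝ) (a : Fin n → ℝ)
    (θh : EuclideanSpace ℝ (Fin m)) :
    HasGradientAt (fun x => Lstar + (1 / 2) * ∑ j, a j * lam j x)
      (∑ j, ((1 / 2) * a j) • gradient (lam j) θh) θh := by
  rw [hasGradientAt_iff_hasFDerivAt]
  have h1 : ∀ j, HasFDerivAt (lam j)
      ((InnerProductSpace.toDual ℝ _) (gradient (lam j) θh)) θh :=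
    fun j => ((hlam j).differentiableAt.hasGradientAt).hasFDerivAt
  have h2 : HasFDerivAt (fun x => ∑ j, a j * lam j x)
      (∑ j, (a j) • (InnerProductSpace.toDual ℝ _) (gradient (lam j) θh)) θh :=
    HasFDerivAt.fun_sum fun j _ => (h1 j).const_mul (a j)
  have h3 := (h2.const_mul (1 / 2)).const_add Lstar
  refine h3.congr_fderiv (Eq.symm ?_)
  rw [map_sum, Finset.smul_sum]
  refine Finset.sum_congr rfl fun j _ => ?_
  rw [_root_.map_smul, smul_smul]

/-- For the valley loss `L(θ̄, θ̂) = L* + (1/2) ∑ⱼ θⱼ² λⱼ(θ̂)` and a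
probability measure `μ` with second moments `∫ θⱼ² dμ = cⱼ`, for every `i` and `θ̂`
the expected alignment of `∇̂λᵢ` with the degenerate-space gradient satisfies
`∫ ⟨∇̂λᵢ(θ̂), ∇̂L(θ̄,θ̂)⟩ dμ(θ̄) = (1/2) ∑ⱼ cⱼ ⟨∇̂λᵢ(θ̂), ∇̂λⱼ(θ̂)⟩`. -/
theorem expected_eigenvalue_alignment
    (n m : ℕ) (hn : 0 < n) (hm : 0 < m)
    (lam : Fin n → EuclideanSpace ℝ (Fin m) → ℝ)
    (hlam : ∀ j, Differentiable ℝ (lam j))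
    (Lstar : ℝ)
    (L : (Fin n → ℝ) → EuclideanSpace ℝ (Fin m) → ℝ)
    (hL : ∀ θb θh, L θb θh = Lstar + (1 / 2) * ∑ j, (θb j) ^ 2 * lam j θh)
    (μ : Measure (Fin n → ℝ)) [IsProbabilityMeasure μ]
    (c : Fin n → ℝ)
    (hint : ∀ j, Integrable (fun θb => (θb j) ^ 2) μ)
    (hmom : ∀ j, ∫ θb, (θb j) ^ 2 ∂μ = c j)
    (i : Fin n) (θh : EuclideanSpace ℝ (Fin m)) :
    (∫ θb, (inner ℝ (gradient (lam i) θh) (gradient (L θb) θh) : ℝ) ∂μ)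
      = (1 / 2) * ∑ j, c j * (inner ℝ (gradient (lam i) θh) (gradient (lam j) θh) : ℝ) := by
  have hgrad : ∀ θb, gradient (L θb) θh
      = ∑ j, ((1 / 2) * (θb j) ^ 2) • gradient (lam j) θh := by
    intro θb
    have h := valley_gradient m n lam hlam Lstar (fun j => (θb j) ^ 2) θh
    have hfun : L θb = fun x => Lstar + (1 / 2) * ∑ j, (θb j) ^ 2 * lam j x :=
      funext fun x => hL θb x
    rw [hfun]
    exact h.gradient
  have hInt : ∀ θb, (inner ℝ (gradient (lam i) θh) (gradient (L θb) θh) : ℝ)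
      = ∑ j, (θb j) ^ 2 * ((1 / 2) * (inner ℝ (gradient (lam i) θh) (gradient (lam j) θh) : ℝ)) := by
    intro θb
    rw [hgrad θb, inner_sum]
    refine Finset.sum_congr rfl fun j _ => ?_
    rw [real_inner_smul_right]; ring
  simp only [hInt]
  rw [integral_finset_sum _ (fun j _ =>
    (hint j).mul_const ((1 / 2) * (inner ℝ (gradient (lam i) θh) (gradient (lam j) θh) : ℝ)))]
  rw [Finset.mul_sum]
  refine Finset.sum_congr rfl fun j _ => ?_
  rw [integral_mul_const, hmom j]; ring
end

section
/- Let N be a positive integer, let B be a nonempty finite index set, and let L_b : ℝ^N → ℝ be differentiable for each b ∈ B, with full-batch loss L = (1/|B|) Σ_{b∈B} L_b. Fix a learning rate η > 0 and an index i ∈ {1, …, N}. Let μ be a probability measure on ℝ^N such that θ_i², θ_i ∂_i L_b(θ), and (∂_i L_b(θ))² are μ-integrable for all b, and suppose the stationarity condition holds for the observable θ_i²: ∫ (1/|B|) Σ_{b∈B} (θ_i − η ∂_i L_b(θ))² dμ(θ) = ∫ θ_i² dμ(θ). Then ∫ θ_i ∂_i L(θ) dμ(θ) = (η/2) ∫ C̃_{ii}(θ)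 dμ(θ), where C̃_{ii}(θ) = (1/|B|) Σ_{b∈B} (∂_i L_b(θ))² is the diagonal two-point noise matrix. -/
open MeasureTheory

/-- (Fluctuation–dissipation relation for the observable `θᵢ²`.)
For differentiable per-batch losses `L_b : ℝᴺ → ℝ` (b in a nonempty finite set `B`)
with full-batch loss `L = (1/|B|) ∑_b L_b`, learning rate `η > 0`, coordinate `i`,
and a probability measure `μ` under which `θᵢ²`, `θᵢ ∂ᵢL_b` and `(∂ᵢL_b)²` are
integrable, if the stationarity condition
`∫ (1/|B|) ∑_b (θᵢ - η ∂ᵢL_b(θ))² dμ = ∫ θᵢ² dμ` holds, then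
`∫ θᵢ ∂ᵢL(θ) dμ = (η/2) ∫ C̃ᵢᵢ(θ) dμ` where `C̃ᵢᵢ(θ) = (1/|B|) ∑_b (∂ᵢL_b(θ))²`. -/
theorem fluctuation_dissipation_theta_sq
    (N : ℕ) (hN : 0 < N)
    (B : Type*) [Fintype B] [Nonempty B]
    (Lb : B → (Fin N → ℝ) → ℝ)
    (hLb : ∀ b, Differentiable ℝ (Lb b))
    (L : (Fin N → ℝ) → ℝ)
    (hLdef : ∀ θ, L θ = (1 / (Fintype.card B : ℝ)) * ∑ b, Lb b θ)
    (η : ℝ) (hη : 0 < η)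
    (i : Fin N)
    (μ : Measure (Fin N → ℝ)) [IsProbabilityMeasure μ]
    (hint1 : Integrable (fun θ => (θ i) ^ 2) μ)
    (hint2 : ∀ b, Integrable (fun θ => θ i * fderiv ℝ (Lb b) θ (Pi.single i 1)) μ)
    (hint3 : ∀ b, Integrable (fun θ => (fderiv ℝ (Lb b) θ (Pi.single i 1)) ^ 2) μ)
    (hstat :
      (∫ θ, (1 / (Fintype.card B : ℝ)) *
          ∑ b, (θ i - η * fderiv ℝ (Lb b) θ (Pi.single i 1)) ^ 2 ∂μ)
        = ∫ θ, (θ i) ^ 2 ∂μ) :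
    (∫ θ, θ i * fderiv ℝ L θ (Pi.single i 1) ∂μ)
      = (η / 2) *
        ∫ θ, (1 / (Fintype.card B : ℝ)) *
            ∑ b, (fderiv ℝ (Lb b) θ (Pi.single i 1)) ^ 2 ∂μ := by
  classical
  set g : B → (Fin N → ℝ) → ℝ := fun b θ => fderiv ℝ (Lb b) θ (Pi.single i 1) with hg
  set c : ℝ := 1 / (Fintype.card B : ℝ) with hc
  have hcard : (0:ℝ) < (Fintype.card B : ℝ) := by exact_mod_cast Fintype.card_pos
  have hcmul : c * (Fintype.card B : ℝ) = 1 := by rw [hc, one_div, inv_mul_cancel₀ hcard.ne']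
  -- derivative of L
  have hLd : ∀ θ, fderiv ℝ L θ (Pi.single i 1) = c * ∑ b, g b θ := by
    intro θ
    have hLeq : L = fun θ => c * ∑ b, Lb b θ := funext hLdef
    rw [hLeq]
    have hsum : DifferentiableAt ℝ (fun θ => ∑ b, Lb b θ) θ :=
      DifferentiableAt.fun_sum (fun b _ => (hLb b).differentiableAt)
    rw [fderiv_const_mul hsum c]
    have : fderiv ℝ (fun θ => ∑ b, Lb b θ) θ = ∑ b, fderiv ℝ (Lb b) θ :=
      fderiv_fun_sum (fun b _ => (hLb b).differentiableAt)
    simp [this, ContinuousLinearMap.sum_apply, Finset.mul_sum, hg]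
  have hI2 : ∀ b, Integrable (fun θ => (θ i)^2 - (2*η) * (θ i * g b θ)) μ :=
    fun b => hint1.sub ((hint2 b).const_mul (2*η))
  have hFint : ∀ b, Integrable (fun θ => (θ i)^2 - (2*η) * (θ i * g b θ)
      + η^2 * (g b θ)^2) μ := fun b => (hI2 b).add ((hint3 b).const_mul (η^2))
  have hFint' : ∀ b, Integrable (fun θ => (θ i - η * g b θ) ^ 2) μ := by
    intro b
    have : (fun θ => (θ i - η * g b θ) ^ 2) =
        fun θ => (θ i)^2 - (2*η) * (θ i * g b θ) + η^2 * (g b θ)^2 := by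
      funext θ; ring
    rw [this]; exact hFint b
  have hFval : ∀ b, (∫ θ, (θ i - η * g b θ) ^ 2 ∂μ)
      = (∫ θ, (θ i)^2 ∂μ) - (2*η) * (∫ θ, θ i * g b θ ∂μ)
        + η^2 * (∫ θ, (g b θ)^2 ∂μ) := by
    intro b
    have he : (fun θ => (θ i - η * g b θ) ^ 2) =
        fun θ => ((θ i)^2 - (2*η) * (θ i * g b θ)) + η^2 * (g b θ)^2 := by
      funext θ; ring
    rw [he, integral_add (hI2 b) ((hint3 b).const_mul (η^2)),
      integral_sub hint1 ((hint2 b).const_mul (2*η)),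
      integral_const_mul, integral_const_mul]
  have hstat2 : (∫ θ, c * ∑ b, (θ i - η * g b θ) ^ 2 ∂μ)
      = c * ∑ b, ((∫ θ, (θ i)^2 ∂μ) - (2*η) * (∫ θ, θ i * g b θ ∂μ)
        + η^2 * (∫ θ, (g b θ)^2 ∂μ)) := by
    rw [integral_const_mul, integral_finset_sum _ (fun b _ => hFint' b)]
    congr 1
    exact Finset.sum_congr rfl (fun b _ => hFval b)
  have hstat' : c * ∑ b, ((∫ θ, (θ i)^2 ∂μ) - (2*η) * (∫ θ, θ i * g b θ ∂μ)
        + η^2 * (∫ θ, (g b θ)^2 ∂μ)) = ∫ θ, (θ i)^2 ∂μ := by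
    rw [← hstat2]; exact hstat
  have h1 : ∑ b, ((∫ θ, (θ i)^2 ∂μ) - (2*η) * (∫ θ, θ i * g b θ ∂μ)
        + η^2 * (∫ θ, (g b θ)^2 ∂μ))
      = (Fintype.card B : ℝ) * (∫ θ, (θ i)^2 ∂μ)
        - (2*η) * ∑ b, (∫ θ, θ i * g b θ ∂μ)
        + η^2 * ∑ b, (∫ θ, (g b θ)^2 ∂μ) := by
    rw [Finset.sum_add_distrib, Finset.sum_sub_distrib, Finset.sum_const,
      ← Finset.mul_sum, ← Finset.mul_sum]
    simp [Finset.card_univ, mul_comm]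
  rw [h1] at hstat'
  have h2 : c * ((Fintype.card B : ℝ) * (∫ θ, (θ i)^2 ∂μ)) = ∫ θ, (θ i)^2 ∂μ := by
    rw [← mul_assoc, hcmul, one_mul]
  have hJK : c * ∑ b, (∫ θ, θ i * g b θ ∂μ)
      = (η/2) * (c * ∑ b, (∫ θ, (g b θ)^2 ∂μ)) := by
    nlinarith [hstat', h2, hη]
  have hLHS : (∫ θ, θ i * fderiv ℝ L θ (Pi.single i 1) ∂μ)
      = c * ∑ b, (∫ θ, θ i * g b θ ∂μ) := by
    have he : (fun θ => θ i * fderiv ℝ L θ (Pi.single i 1)) =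
        fun θ => c * ∑ b, θ i * g b θ := by
      funext θ; rw [hLd θ, Finset.mul_sum, Finset.mul_sum]
      rw [Finset.mul_sum]; exact Finset.sum_congr rfl (fun b _ => by ring)
    rw [he, integral_const_mul, integral_finset_sum _ (fun b _ => hint2 b)]
  have hRHS : (∫ θ, c * ∑ b, (g b θ) ^ 2 ∂μ) = c * ∑ b, (∫ θ, (g b θ)^2 ∂μ) := by
    rw [integral_const_mul, integral_finset_sum _ (fun b _ => hint3 b)]
  rw [hLHS, hRHS, hJK]
end
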